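/- Let n > 2 and let a,b,c,d,a',b',c',d' ∈ ℤ with ad−bc ≠ 0 and a'd'−b'c' ≠ 0. Let Q_{n,1} = conv{0, (a,b,0,…,0), (c,d,0,…,0), e_3, …, e_n} ⊂ ℝⁿ and Q_{n,2} = conv{0, (a',b',0,…,0), (c',d',0,…,0), e_3, …, e_n} ⊂ ℝⁿ. Suppose U is an affine-unimodular transformation with U(Q_{n,1}) = Q_{n,2} and U(0) = e_i for some 3 ≤ i ≤ n. Then with ℓ = gcd(c−a, d−b), the 2×2 matrix with columns (a,b) and ((c−a)/ℓ, (d−b)/ℓ) lies in GL_2(ℤ); equivalently, |ad − bc| = gcd(c−a, d−b). -/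

import Mathlib

open Pointwise

/-- An affine-unimodular transformation `v ↦ A v + b` with `A ∈ GL_n(ℤ)`, `b ∈ ℤⁿ`. -/
def IsUnimodularMap (n : ℕ) (U : (Fin n → ℝ) → (Fin n → ℝ)) : Prop :=
  ∃ (A : Matrix (Fin n) (Fin n) ℤ) (b : Fin n → ℤ),
    (A.det = 1 ∨ A.det = -1) ∧
    ∀ v, U v = (A.map (Int.cast : ℤ → ℝ)).mulVec v + fun i => (b i : ℝ)

/-- The planar point `(a, b)` embedded in ℝⁿ (zero in all further coordinates). -/
def planarPt (n : ℕ) (a b : ℤ) : Fin n → ℝ :=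
  fun i => if (i : ℕ) = 0 then (a : ℝ) else if (i : ℕ) = 1 then (b : ℝ) else 0

/-- Vertex set of the n-dimensional pyramid over `conv{(0,0),(a,b),(c,d)}`:
the points `(0,0)`, `(a,b)`, `(c,d)` embedded in ℝⁿ together with the standard basis
vectors `e₃, …, eₙ`. -/
def pyramidVerts (n : ℕ) (a b c d : ℤ) : Set (Fin n → ℝ) :=
  {planarPt n 0 0, planarPt n a b, planarPt n c d} ∪
    {x | ∃ i : Fin n, 2 ≤ (i : ℕ) ∧ x = Pi.single i 1}

/-- The n-dimensional pyramid over the 2-simplex `conv{(0,0),(a,b),(c,d)}`. -/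
def pyramid (n : ℕ) (a b c d : ℤ) : Set (Fin n → ℝ) :=
  convexHull ℝ (pyramidVerts n a b c d)

private lemma vert_facts (n : ℕ) (a b c d : ℤ) (i : Fin n) (hi : 2 ≤ (i : ℕ)) :
    ∀ v ∈ pyramidVerts n a b c d,
      (0 ≤ v i ∧ v i ≤ 1) ∧ (v i = 1 → v = Pi.single i 1) := by
  intro v hv
  have hi0 : (i : ℕ) ≠ 0 := by omega
  have hi1 : (i : ℕ) ≠ 1 := by omega
  rcases hv with (rfl | rfl | rfl) | ⟨j, hj, rfl⟩
  · simp [planarPt, hi0, hi1]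
  · simp [planarPt, hi0, hi1]
  · simp [planarPt, hi0, hi1]
  · rcases eq_or_ne i j with rfl | h
    · simp
    · simp [Pi.single_apply, h]

private lemma pyramid_coord (n : ℕ) (a b c d : ℤ) (i : Fin n) (hi : 2 ≤ (i : ℕ))
    {x : Fin n → ℝ} (hx : x ∈ pyramid n a b c d) : 0 ≤ x i ∧ x i ≤ 1 := by
  have hconv : Convex ℝ {y : Fin n → ℝ | 0 ≤ y i ∧ y i ≤ 1} := by
    intro p hp q hq α β hα hβ hαβ
    have hev : (α • p + β • q) i = α * p i + β * q i := by simp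
    constructor
    · rw [hev]; nlinarith [hp.1, hq.1]
    · rw [hev]; nlinarith [hp.2, hq.2]
  exact convexHull_min (fun v hv => (vert_facts n a b c d i hi v hv).1) hconv hx

private lemma pyramid_face (n : ℕ) (a b c d : ℤ) (i : Fin n) (hi : 2 ≤ (i : ℕ))
    {x : Fin n → ℝ} (hx : x ∈ pyramid n a b c d) (hx1 : x i = 1) :
    x = Pi.single i 1 := by
  rw [pyramid, convexHull_eq] at hx
  obtain ⟨ι, t, w, z, hw0, hw1, hz, hcm⟩ := hx
  rw [Finset.centerMass_eq_of_sum_1 _ _ hw1] at hcm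
  have hz' : ∀ k ∈ t, (0 ≤ z k i ∧ z k i ≤ 1) ∧ (z k i = 1 → z k = Pi.single i 1) :=
    fun k hk => vert_facts n a b c d i hi (z k) (hz k hk)
  have hxi : ∑ k ∈ t, w k * z k i = 1 := by
    rw [← hcm] at hx1
    rw [← hx1]
    simp [Finset.sum_apply]
  have hsum : ∑ k ∈ t, w k * (1 - z k i) = 0 := by
    have : ∑ k ∈ t, w k * (1 - z k i) = (∑ k ∈ t, w k) - ∑ k ∈ t, w k * z k i := by
      rw [← Finset.sum_sub_distrib]
      exact Finset.sum_congr rfl fun k hk => by ring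
    rw [this, hw1, hxi]; ring
  have key : ∀ k ∈ t, w k * (1 - z k i) = 0 :=
    (Finset.sum_eq_zero_iff_of_nonneg
      (fun k hk => mul_nonneg (hw0 k hk) (by linarith [(hz' k hk).1.2]))).mp hsum
  have hterm : ∀ k ∈ t, w k • z k = w k • (Pi.single i 1 : Fin n → ℝ) := by
    intro k hk
    rcases mul_eq_zero.mp (key k hk) with h | h
    · rw [h, zero_smul, zero_smul]
    · have h1 : z k i = 1 := by linarith
      rw [(hz' k hk).2 h1]
  rw [← hcm, Finset.sum_congr rfl hterm, ← Finset.sum_smul, hw1, one_smul]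

private lemma endgame (a b c d r s : ℤ) (h1 : a * d - b * c ≠ 0)
    (e1 : a * r + b * s = -1) (e2 : c * r + d * s = -1) :
    (!![a, (c - a) / (Int.gcd (c - a) (d - b) : ℤ);
        b, (d - b) / (Int.gcd (c - a) (d - b) : ℤ)]).det = 1 ∨
      (!![a, (c - a) / (Int.gcd (c - a) (d - b) : ℤ);
          b, (d - b) / (Int.gcd (c - a) (d - b) : ℤ)]).det = -1 := by
  set m : ℤ := a * d - b * c with hm
  have hca : c - a = m * s := by linear_combination c * e1 - a * e2
  have hdb : d - b = m * (-r) := by linear_combination d * e1 - b * e2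
  have hcop : IsCoprime s (-r) := ⟨-b, a, by linear_combination -e1⟩
  have hgcd : Int.gcd (c - a) (d - b) = m.natAbs := by
    rw [hca, hdb, Int.gcd_mul_left, Int.isCoprime_iff_gcd_eq_one.mp hcop, mul_one]
  rw [Matrix.det_fin_two_of, hgcd, hca, hdb]
  rcases lt_or_gt_of_ne h1 with hneg | hpos
  · have habs : (m.natAbs : ℤ) = -m := by
      rw [Int.ofNat_natAbs_of_nonpos (le_of_lt hneg)]
    rw [habs]
    have h1' : m * s / -m = -s := by
      rw [show m * s = -m * -s by ring, Int.mul_ediv_cancel_left _ (by omega)]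
    have h2' : m * -r / -m = r := by
      rw [show m * -r = -m * r by ring, Int.mul_ediv_cancel_left _ (by omega)]
    rw [h1', h2']
    right; linear_combination e1
  · have habs : (m.natAbs : ℤ) = m := Int.natAbs_of_nonneg (le_of_lt hpos)
    rw [habs, Int.mul_ediv_cancel_left _ (by omega), Int.mul_ediv_cancel_left _ (by omega)]
    left; linear_combination -e1

/-- If an affine-unimodular transformation `U` maps the pyramid `Q_{n,1}` onto `Q_{n,2}` and
sends the vertex `0` to a standard basis vector `eᵢ` with `i ≥ 3`, then, with
`ℓ = gcd(c-a, d-b)`, the matrix with columns `(a,b)` and `((c-a)/ℓ, (d-b)/ℓ)` lies in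
`GL_2(ℤ)`. -/
theorem origin_to_basis_gcd (n : ℕ) (hn : 2 < n) (a b c d a' b' c' d' : ℤ)
    (h1 : a * d - b * c ≠ 0) (h2 : a' * d' - b' * c' ≠ 0)
    (U : (Fin n → ℝ) → (Fin n → ℝ)) (hU : IsUnimodularMap n U)
    (hUQ : U '' pyramid n a b c d = pyramid n a' b' c' d')
    (i : Fin n) (hi : 2 ≤ (i : ℕ))
    (hUe : U (planarPt n 0 0) = Pi.single i 1) :
    (!![a, (c - a) / (Int.gcd (c - a) (d - b) : ℤ);
        b, (d - b) / (Int.gcd (c - a) (d - b) : ℤ)]).det = 1 ∨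
      (!![a, (c - a) / (Int.gcd (c - a) (d - b) : ℤ);
          b, (d - b) / (Int.gcd (c - a) (d - b) : ℤ)]).det = -1 := by
  obtain ⟨A, β, hdet, hAf⟩ := hU
  set M : Matrix (Fin n) (Fin n) ℝ := A.map (Int.cast : ℤ → ℝ) with hM
  set j0 : Fin n := ⟨0, by omega⟩
  set j1 : Fin n := ⟨1, by omega⟩
  -- planar points as combinations of basis vectors
  have hplanar : ∀ p q : ℤ,
      planarPt n p q = (p : ℝ) • (Pi.single j0 1 : Fin n → ℝ) + (q : ℝ) • (Pi.single j1 1 : Fin n → ℝ) := by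
    intro p q
    funext j
    simp only [planarPt, Pi.add_apply, Pi.smul_apply, smul_eq_mul]
    by_cases hj0 : (j : ℕ) = 0
    · have hj : j = j0 := Fin.ext hj0
      subst hj
      have hne : j0 ≠ j1 := by simp [Fin.ext_iff, j0, j1]
      simp [hj0, Pi.single_apply, hne]
    · by_cases hj1 : (j : ℕ) = 1
      · have hj : j = j1 := Fin.ext hj1
        subst hj
        have : j1 ≠ j0 := by simp [Fin.ext_iff, j0, j1]
        simp [hj1, Pi.single_apply, this]
      · have h0 : j ≠ j0 := by simp [Fin.ext_iff, j0]; omega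
        have h1' : j ≠ j1 := by simp [Fin.ext_iff, j1]; omega
        simp [hj0, hj1, Pi.single_apply, h0, h1']
  have hp00 : planarPt n 0 0 = 0 := by
    rw [hplanar]; simp
  -- the i-th coordinate of β is 1
  have hβi : β i = 1 := by
    have h0 : U (planarPt n 0 0) i = (β i : ℝ) := by
      rw [hAf, hp00, Matrix.mulVec_zero]
      simp
    rw [hUe] at h0
    simp at h0
    exact_mod_cast h0.symm
  -- evaluation of U at planar points
  have hev : ∀ p q : ℤ, U (planarPt n p q) i =
      ((p * A i j0 + q * A i j1 + 1 : ℤ) : ℝ) := by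
    intro p q
    rw [hAf, hplanar]
    simp only [Pi.add_apply, Matrix.mulVec_add, Matrix.mulVec_smul, Matrix.mulVec_single,
      Pi.smul_apply, smul_eq_mul, mul_one, hβi]
    push_cast
    simp [hM, Matrix.map_apply]
  -- M is invertible
  have hMdet : IsUnit M.det := by
    have : M.det = ((A.det : ℤ) : ℝ) := by
      rw [hM]
      exact ((Int.castRingHom ℝ).map_det A).symm
    rcases hdet with h | h <;> rw [this, h] <;> simp
  -- main claim: planar vertices give value 0
  have main : ∀ p q : ℤ, (p ≠ 0 ∨ q ≠ 0) →
      planarPt n p q ∈ pyramidVerts n a b c d →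
      p * A i j0 + q * A i j1 + 1 = 0 := by
    intro p q hpq hvert
    have hmem : planarPt n p q ∈ pyramid n a b c d := subset_convexHull ℝ _ hvert
    have himg : U (planarPt n p q) ∈ pyramid n a' b' c' d' := by
      rw [← hUQ]; exact ⟨_, hmem, rfl⟩
    have hbd := pyramid_coord n a' b' c' d' i hi himg
    rw [hev] at hbd
    have hbd' : (0:ℤ) ≤ p * A i j0 + q * A i j1 + 1 ∧
        p * A i j0 + q * A i j1 + 1 ≤ 1 := by
      exact ⟨by exact_mod_cast hbd.1, by exact_mod_cast hbd.2⟩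
    rcases (by omega : p * A i j0 + q * A i j1 + 1 = 0 ∨ p * A i j0 + q * A i j1 + 1 = 1)
      with h | h
    · exact h
    · exfalso
      have hone : U (planarPt n p q) i = 1 := by rw [hev, h]; norm_num
      have hface := pyramid_face n a' b' c' d' i hi himg hone
      have heq : M.mulVec (planarPt n p q) = M.mulVec 0 := by
        have h3 := hface.trans hUe.symm
        rw [hAf, hAf, hp00] at h3
        exact add_right_cancel h3
      have hzero : planarPt n p q = 0 := by
        have h2' : (M⁻¹).mulVec (M.mulVec (planarPt n p q)) = planarPt n p q := by
          rw [Matrix.mulVec_mulVec, Matrix.nonsing_inv_mul M hMdet, Matrix.one_mulVec]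
        rw [heq, Matrix.mulVec_zero, Matrix.mulVec_zero] at h2'
        exact h2'.symm
      have hp : (p : ℝ) = 0 := by
        have h4 := congrFun hzero j0
        simpa [planarPt, j0] using h4
      have hq : (q : ℝ) = 0 := by
        have h4 := congrFun hzero j1
        simpa [planarPt, j1] using h4
      rcases hpq with h' | h'
      · exact h' (by exact_mod_cast hp)
      · exact h' (by exact_mod_cast hq)
  have hab : a ≠ 0 ∨ b ≠ 0 := by
    by_contra h; push_neg at h; apply h1; rw [h.1, h.2]; ring
  have hcd : c ≠ 0 ∨ d ≠ 0 := by
    by_contra h; push_neg at h; apply h1; rw [h.1, h.2]; ring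
  have memab : planarPt n a b ∈ pyramidVerts n a b c d :=
    Set.mem_union_left _ (Set.mem_insert_iff.mpr (Or.inr (Set.mem_insert _ _)))
  have memcd : planarPt n c d ∈ pyramidVerts n a b c d :=
    Set.mem_union_left _
      (Set.mem_insert_iff.mpr (Or.inr (Set.mem_insert_iff.mpr (Or.inr rfl))))
  have ea := main a b hab memab
  have ec := main c d hcd memcd
  exact endgame a b c d (A i j0) (A i j1) h1 (by linarith) (by linarith)
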